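/- arXiv:2109.01358 — 5 statements merged into one kernel-verified Lean document; each statement's English description precedes it below -/
import Mathlib

section
/- Let A be an n×n real matrix, B₂ an n×1 real matrix, C₂ a p×n real matrix, Â an m×m real matrix, Ĉ a 1×m real matrix, B̂₂ an m×1 real matrix, and D̂₂ ∈ ℝ. Define Ā = [[A, B₂Ĉ],[0, Â]], B̄₂ = [[B₂D̂₂],[B̂₂]], and C̄₂ = [C₂, 0]. Then for every i ≥ 0, C̄₂ĀⁱB̄₂ = C₂AⁱB₂·D̂₂ + Σ_{j=1}^{i} C₂A^{i−j}B₂·ĈÂ^{j−1}B̂₂. Consequently, if r₂ ≥ 1 is such that C₂AⁱB₂ = 0 for all 0 ≤ i ≤ r₂−2 and C₂A^{r₂−1}B₂ ≠ 0, and D̂₂ ≠ 0, then C̄₂ĀⁱB̄₂ = 0 for all 0 ≤ i ≤ r₂−2 and C̄₂Ā^{r₂−1}B̄₂ = C₂A^{r₂−1}B₂·D̂₂ ≠ 0; that is, the relative degree of (Ā, B̄₂, C̄₂) equals the relative degree r₂ of (A, B₂, C₂). -/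
open Matrix

/-- Relative-degree computation of Appendix D: for the augmented matrices
`Ā = [[A,B₂Ĉ],[0,Â]]`, `B̄₂ = [[B₂D̂₂],[B̂₂]]`, `C̄₂ = [C₂,0]` one has
`C̄₂ĀⁱB̄₂ = C₂AⁱB₂·D̂₂ + ∑_{j=1}^{i} C₂A^{i−j}B₂·ĈÂ^{j−1}B̂₂`; consequently, if
`(A,B₂,C₂)` has relative degree `r₂` and `D̂₂ ≠ 0`, so does `(Ā,B̄₂,C̄₂)`. -/
theorem stmt_9 (n m p : ℕ)
    (A : Matrix (Fin n) (Fin n) ℝ) (B₂ : Matrix (Fin n) (Fin 1) ℝ)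
    (C₂ : Matrix (Fin p) (Fin n) ℝ)
    (Ahat : Matrix (Fin m) (Fin m) ℝ) (Chat : Matrix (Fin 1) (Fin m) ℝ)
    (B2hat : Matrix (Fin m) (Fin 1) ℝ) (D2hat : ℝ)
    (Abar : Matrix (Fin n ⊕ Fin m) (Fin n ⊕ Fin m) ℝ)
    (hAbar : Abar = Matrix.fromBlocks A (B₂ * Chat) 0 Ahat)
    (B2bar : Matrix (Fin n ⊕ Fin m) (Fin 1) ℝ)
    (hB2bar : B2bar = Matrix.fromRows (D2hat • B₂) B2hat)
    (C2bar : Matrix (Fin p) (Fin n ⊕ Fin m) ℝ)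
    (hC2bar : C2bar = Matrix.fromCols C₂ 0) :
    (∀ i : ℕ,
      C2bar * Abar ^ i * B2bar
        = D2hat • (C₂ * A ^ i * B₂)
          + ∑ j ∈ Finset.Icc 1 i,
              C₂ * A ^ (i - j) * B₂ * (Chat * Ahat ^ (j - 1) * B2hat)) ∧
    (∀ r₂ : ℕ, 1 ≤ r₂ →
      (∀ i : ℕ, i + 2 ≤ r₂ → C₂ * A ^ i * B₂ = 0) →
      C₂ * A ^ (r₂ - 1) * B₂ ≠ 0 → D2hat ≠ 0 →
      (∀ i : ℕ, i + 2 ≤ r₂ → C2bar * Abar ^ i * B2bar = 0) ∧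
      C2bar * Abar ^ (r₂ - 1) * B2bar = D2hat • (C₂ * A ^ (r₂ - 1) * B₂) ∧
      C2bar * Abar ^ (r₂ - 1) * B2bar ≠ 0) := by
  -- the block structure of powers of Abar
  have hIcc : ∀ (M : Type) (_ : AddCommMonoid M), ∀ i : ℕ, ∀ f : ℕ → M,
      ∑ j ∈ Finset.Icc 1 i, f j = ∑ k ∈ Finset.range i, f (1 + k) := by
    intro M _ i f
    induction i with
    | zero => simp
    | succ i ih =>
        rw [Finset.sum_Icc_succ_top (by omega), ih, Finset.sum_range_succ,
          Nat.add_comm 1 i]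
  have hpow : ∀ i : ℕ, Abar ^ i =
      Matrix.fromBlocks (A ^ i)
        (∑ k ∈ Finset.range i, A ^ (i - (k + 1)) * (B₂ * Chat) * Ahat ^ k)
        0 (Ahat ^ i) := by
    intro i
    induction i with
    | zero => simp [Matrix.fromBlocks_one]
    | succ i ih =>
        rw [pow_succ, ih, hAbar, Matrix.fromBlocks_multiply]
        simp only [Matrix.mul_zero, Matrix.zero_mul, add_zero, zero_add, ← pow_succ]
        rw [Finset.sum_range_succ']
        simp only [Nat.add_sub_cancel, pow_zero, Matrix.mul_one]
        rw [add_comm (A ^ i * (B₂ * Chat)) ((∑ k ∈ Finset.range i, A ^ (i - (k + 1)) * (B₂ * Chat) * Ahat ^ k) * Ahat), Matrix.sum_mul]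
        have hterm : ∀ k ∈ Finset.range i,
              A ^ (i - (k + 1)) * (B₂ * Chat) * Ahat ^ k * Ahat
                = A ^ (i + 1 - (k + 1 + 1)) * (B₂ * Chat) * Ahat ^ (k + 1) := by
          intro k hk
          have h : i + 1 - (k + 1 + 1) = i - (k + 1) := by omega
          rw [h, Matrix.mul_assoc, ← pow_succ]
        rw [Finset.sum_congr rfl hterm]
  have key : ∀ i : ℕ,
      C2bar * Abar ^ i * B2bar
        = D2hat • (C₂ * A ^ i * B₂)
          + ∑ j ∈ Finset.Icc 1 i,
              C₂ * A ^ (i - j) * B₂ * (Chat * Ahat ^ (j - 1) * B2hat) := by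
    intro i
    rw [hpow, hC2bar, hB2bar, Matrix.fromCols_mul_fromBlocks,
      Matrix.fromCols_mul_fromRows]
    simp only [Matrix.zero_mul, add_zero, Matrix.mul_zero, zero_add]
    congr 1
    · rw [Matrix.mul_smul, Matrix.mul_assoc]
    · rw [hIcc _ inferInstance i (fun j => C₂ * A ^ (i - j) * B₂ * (Chat * Ahat ^ (j - 1) * B2hat))]
      rw [Matrix.mul_sum, Matrix.sum_mul]
      refine Finset.sum_congr rfl fun k hk => ?_
      have h1 : i - (1 + k) = i - (k + 1) := by omega
      have h2 : 1 + k - 1 = k := by omega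
      rw [h1, h2]
      simp only [Matrix.mul_assoc]
  refine ⟨key, fun r₂ hr₂ hzero hnz hD => ?_⟩
  have hvan : ∀ i : ℕ, i + 2 ≤ r₂ → C2bar * Abar ^ i * B2bar = 0 := by
    intro i hi
    rw [key i, hzero i hi, smul_zero, zero_add]
    refine Finset.sum_eq_zero fun j hj => ?_
    rw [Finset.mem_Icc] at hj
    have : (i - j) + 2 ≤ r₂ := by omega
    rw [hzero _ this, Matrix.zero_mul]
  have htop : C2bar * Abar ^ (r₂ - 1) * B2bar = D2hat • (C₂ * A ^ (r₂ - 1) * B₂) := by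
    rw [key (r₂ - 1)]
    have : ∑ j ∈ Finset.Icc 1 (r₂ - 1),
        C₂ * A ^ (r₂ - 1 - j) * B₂ * (Chat * Ahat ^ (j - 1) * B2hat) = 0 := by
      refine Finset.sum_eq_zero fun j hj => ?_
      rw [Finset.mem_Icc] at hj
      have : (r₂ - 1 - j) + 2 ≤ r₂ := by omega
      rw [hzero _ this, Matrix.zero_mul]
    rw [this, add_zero]
  exact ⟨hvan, htop, by rw [htop]; exact smul_ne_zero hD hnz⟩
end

section
/- Let A be an n×n real matrix, B₁ and B₂ n×1 real matrices, C₂ a p×n real matrix, Â an m×m real matrix, Ĉ a 1×m real matrix, B̂₂ an m×1 real matrix, and D̂₂ ∈ ℝ with D̂₂ ≠ 0. Define Ā = [[A, B₂Ĉ],[0, Â]], B̄₁ = [[B₁],[0]], B̄₂ = [[B₂D̂₂],[B̂₂]], C̄₂ = [C₂, 0], Ψ̄ = [Ā^{r₁−1}B̄₁, Ā^{r₂−1}B̄₂] and Ψ = [A^{r₁−1}B₁, A^{r₂−1}B₂], where r₁, r₂ ≥ 1. If C₂AⁱB₁ = 0 for all 0 ≤ i ≤ r₁−2, C₂AⁱB₂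 = 0 for all 0 ≤ i ≤ r₂−2, and the p×2 matrix C₂Ψ has full column rank (rank 2), then the p×2 matrix C̄₂Ψ̄ has full column rank; in fact C̄₂Ψ̄ = C₂Ψ·diag(1, D̂₂). -/
open Matrix

/-- Full-column-rank claim of Appendix D: if `C₂Ψ` with `Ψ = [A^{r₁−1}B₁, A^{r₂−1}B₂]`
has full column rank and `D̂₂ ≠ 0`, then the augmented matrix `C̄₂Ψ̄` has full column
rank; in fact `C̄₂Ψ̄ = C₂Ψ·diag(1,D̂₂)`. -/
theorem stmt_10 (n m p : ℕ)
    (A : Matrix (Fin n) (Fin n) ℝ) (B₁ B₂ : Matrix (Fin n) (Fin 1) ℝ)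
    (C₂ : Matrix (Fin p) (Fin n) ℝ)
    (Ahat : Matrix (Fin m) (Fin m) ℝ) (Chat : Matrix (Fin 1) (Fin m) ℝ)
    (B2hat : Matrix (Fin m) (Fin 1) ℝ) (D2hat : ℝ) (hD : D2hat ≠ 0)
    (r₁ r₂ : ℕ) (hr₁ : 1 ≤ r₁) (hr₂ : 1 ≤ r₂)
    (h1 : ∀ i : ℕ, i + 2 ≤ r₁ → C₂ * A ^ i * B₁ = 0)
    (h2 : ∀ i : ℕ, i + 2 ≤ r₂ → C₂ * A ^ i * B₂ = 0)
    (Abar : Matrix (Fin n ⊕ Fin m) (Fin n ⊕ Fin m) ℝ)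
    (hAbar : Abar = Matrix.fromBlocks A (B₂ * Chat) 0 Ahat)
    (B1bar : Matrix (Fin n ⊕ Fin m) (Fin 1) ℝ) (hB1bar : B1bar = Matrix.fromRows B₁ 0)
    (B2bar : Matrix (Fin n ⊕ Fin m) (Fin 1) ℝ)
    (hB2bar : B2bar = Matrix.fromRows (D2hat • B₂) B2hat)
    (C2bar : Matrix (Fin p) (Fin n ⊕ Fin m) ℝ) (hC2bar : C2bar = Matrix.fromCols C₂ 0)
    (Ψ : Matrix (Fin n) (Fin 1 ⊕ Fin 1) ℝ)
    (hΨ : Ψ = Matrix.fromCols (A ^ (r₁ - 1) * B₁) (A ^ (r₂ - 1) * B₂))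
    (Ψbar : Matrix (Fin n ⊕ Fin m) (Fin 1 ⊕ Fin 1) ℝ)
    (hΨbar : Ψbar = Matrix.fromCols (Abar ^ (r₁ - 1) * B1bar) (Abar ^ (r₂ - 1) * B2bar))
    (hrank : (C₂ * Ψ).rank = 2) :
    (C2bar * Ψbar).rank = 2 ∧
    C2bar * Ψbar
      = C₂ * Ψ * Matrix.fromBlocks (1 : Matrix (Fin 1) (Fin 1) ℝ) 0 0
          (D2hat • (1 : Matrix (Fin 1) (Fin 1) ℝ)) := by
  -- Block upper-triangular structure of powers of `Abar`, with vanishing `C₂ * X`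
  -- for the top-right block whenever the exponent is small enough.
  have key : ∀ k : ℕ, ∃ X : Matrix (Fin n) (Fin m) ℝ,
      Abar ^ k = Matrix.fromBlocks (A ^ k) X 0 (Ahat ^ k) ∧
      (k + 1 ≤ r₂ → C₂ * X = 0) := by
    intro k
    induction k with
    | zero =>
      refine ⟨0, ?_, fun _ => by simp⟩
      simp [Matrix.fromBlocks_one]
    | succ k ih =>
      obtain ⟨X, hX, hCX⟩ := ih
      refine ⟨A ^ k * (B₂ * Chat) + X * Ahat, ?_, ?_⟩
      · rw [pow_succ, hX, hAbar, Matrix.fromBlocks_multiply]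
        congr 1 <;> simp [pow_succ]
      · intro hk
        have h2k : C₂ * A ^ k * B₂ = 0 := h2 k (by omega)
        have hCX' : C₂ * X = 0 := hCX (by omega)
        rw [Matrix.mul_add, ← Matrix.mul_assoc, ← Matrix.mul_assoc, ← Matrix.mul_assoc,
          h2k, hCX']
        simp
  obtain ⟨X₁, hX₁, -⟩ := key (r₁ - 1)
  obtain ⟨X₂, hX₂, hCX₂⟩ := key (r₂ - 1)
  have hCX₂' : C₂ * X₂ = 0 := hCX₂ (by omega)
  -- Compute the two columns of `C2bar * Ψbar`.
  have hcol1 : C2bar * (Abar ^ (r₁ - 1) * B1bar) = C₂ * (A ^ (r₁ - 1) * B₁) := by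
    rw [hX₁, hB1bar, hC2bar, Matrix.fromBlocks_mul_fromRows, ← Matrix.mul_assoc]
    rw [Matrix.fromCols_mul_fromRows]
    simp [Matrix.mul_assoc]
  have hcol2 : C2bar * (Abar ^ (r₂ - 1) * B2bar)
      = D2hat • (C₂ * (A ^ (r₂ - 1) * B₂)) := by
    rw [hX₂, hB2bar, hC2bar, Matrix.fromBlocks_mul_fromRows, ← Matrix.mul_assoc]
    rw [Matrix.fromCols_mul_fromRows]
    have : C₂ * (X₂ * B2hat) = 0 := by rw [← Matrix.mul_assoc, hCX₂', Matrix.zero_mul]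
    simp [Matrix.mul_add, this, Matrix.mul_smul, Matrix.mul_assoc]
  have heq : C2bar * Ψbar
      = C₂ * Ψ * Matrix.fromBlocks (1 : Matrix (Fin 1) (Fin 1) ℝ) 0 0
          (D2hat • (1 : Matrix (Fin 1) (Fin 1) ℝ)) := by
    rw [hΨbar, hΨ, Matrix.mul_fromCols, hcol1, hcol2,
      Matrix.mul_fromCols, Matrix.fromCols_mul_fromBlocks]
    congr 1 <;> simp [Matrix.mul_smul, Matrix.mul_assoc]
  refine ⟨?_, heq⟩
  rw [heq]
  have hdet : IsUnit (Matrix.fromBlocks (1 : Matrix (Fin 1) (Fin 1) ℝ) 0 0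
      (D2hat • (1 : Matrix (Fin 1) (Fin 1) ℝ))).det := by
    rw [Matrix.det_fromBlocks_zero₂₁]
    simp [hD]
  rw [Matrix.rank_mul_eq_left_of_isUnit_det _ _ hdet, hrank]
end

section
/- Let Ā be an N×N real matrix, b₁ and b₂ vectors in ℝ^N (N×1 matrices), C̄₂ a p×N real matrix, r₁, r₂ ≥ 1 integers, and s₁, s₂ real scalars. Assume C̄₂Āⁱb₁ = 0 for all 0 ≤ i ≤ r₁−2 and C̄₂Āⁱb₂ = 0 for all 0 ≤ i ≤ r₂−2. Define Y := s₁·Σ_{i=0}^{r₁−1} Āⁱb₁b₁ᵀ(Āᵀ)ⁱ + s₂·Σ_{i=0}^{r₂−1} Āⁱb₂b₂ᵀ(Āᵀ)ⁱ and the N×2 matrix Ψ̄ := [Ā^{r₁−1}b₁, Ā^{r₂−1}b₂]. Then Y·C̄₂ᵀ = Ψ̄·diag(s₁,s₂)·Ψ̄ᵀ·C̄₂ᵀ. -/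
open Matrix

lemma sum_term_key (N p : ℕ) (Abar : Matrix (Fin N) (Fin N) ℝ)
    (b : Matrix (Fin N) (Fin 1) ℝ) (C₂ : Matrix (Fin p) (Fin N) ℝ)
    (r : ℕ) (hr : 1 ≤ r)
    (h : ∀ i : ℕ, i + 2 ≤ r → C₂ * Abar ^ i * b = 0) :
    (∑ i ∈ Finset.range r, Abar ^ i * b * bᵀ * (Abarᵀ) ^ i) * C₂ᵀ
      = Abar ^ (r - 1) * b * bᵀ * (Abarᵀ) ^ (r - 1) * C₂ᵀ := by
  rw [Matrix.sum_mul]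
  rw [Finset.sum_eq_single (r - 1)]
  · intro i hi hne
    have hle : i + 2 ≤ r := by
      have := Finset.mem_range.mp hi
      omega
    have h0 : bᵀ * (Abarᵀ) ^ i * C₂ᵀ = 0 := by
      have : (C₂ * Abar ^ i * b)ᵀ = 0 := by rw [h i hle]; simp
      simpa [transpose_mul, transpose_pow, Matrix.mul_assoc] using this
    calc Abar ^ i * b * bᵀ * (Abarᵀ) ^ i * C₂ᵀ
        = Abar ^ i * b * (bᵀ * (Abarᵀ) ^ i * C₂ᵀ) := by
          simp [Matrix.mul_assoc]
      _ = 0 := by rw [h0, Matrix.mul_zero]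
  · intro hn
    exact absurd (Finset.mem_range.mpr (by omega)) hn

/-- Decoupling identity of Appendix D: with
`Y = s₁ ∑_{i<r₁} Āⁱb₁b₁ᵀ(Āᵀ)ⁱ + s₂ ∑_{i<r₂} Āⁱb₂b₂ᵀ(Āᵀ)ⁱ` and
`Ψ̄ = [Ā^{r₁−1}b₁, Ā^{r₂−1}b₂]`, under the relative-degree conditions one has
`Y C̄₂ᵀ = Ψ̄ diag(s₁,s₂) Ψ̄ᵀ C̄₂ᵀ`. -/
theorem stmt_11 (N p : ℕ)
    (Abar : Matrix (Fin N) (Fin N) ℝ) (b₁ b₂ : Matrix (Fin N) (Fin 1) ℝ)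
    (C₂ : Matrix (Fin p) (Fin N) ℝ)
    (r₁ r₂ : ℕ) (hr₁ : 1 ≤ r₁) (hr₂ : 1 ≤ r₂) (s₁ s₂ : ℝ)
    (h1 : ∀ i : ℕ, i + 2 ≤ r₁ → C₂ * Abar ^ i * b₁ = 0)
    (h2 : ∀ i : ℕ, i + 2 ≤ r₂ → C₂ * Abar ^ i * b₂ = 0)
    (Y : Matrix (Fin N) (Fin N) ℝ)
    (hY : Y = s₁ • (∑ i ∈ Finset.range r₁, Abar ^ i * b₁ * b₁ᵀ * (Abarᵀ) ^ i)
            + s₂ • (∑ i ∈ Finset.range r₂, Abar ^ i * b₂ * b₂ᵀ * (Abarᵀ) ^ i))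
    (Ψbar : Matrix (Fin N) (Fin 1 ⊕ Fin 1) ℝ)
    (hΨbar : Ψbar = Matrix.fromCols (Abar ^ (r₁ - 1) * b₁) (Abar ^ (r₂ - 1) * b₂)) :
    Y * C₂ᵀ
      = Ψbar * Matrix.fromBlocks (s₁ • (1 : Matrix (Fin 1) (Fin 1) ℝ)) 0 0
          (s₂ • (1 : Matrix (Fin 1) (Fin 1) ℝ)) * Ψbarᵀ * C₂ᵀ := by
  subst hY hΨbar
  have key1 := sum_term_key N p Abar b₁ C₂ r₁ hr₁ h1
  have key2 := sum_term_key N p Abar b₂ C₂ r₂ hr₂ h2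
  rw [Matrix.add_mul, Matrix.smul_mul, Matrix.smul_mul, key1, key2]
  rw [transpose_fromCols, fromCols_mul_fromBlocks, fromCols_mul_fromRows]
  simp only [Matrix.mul_zero, Matrix.zero_mul, add_zero, zero_add,
    Matrix.mul_smul, Matrix.smul_mul, Matrix.mul_one]
  rw [Matrix.add_mul, Matrix.smul_mul, Matrix.smul_mul]
  congr 1 <;>
  · congr 1
    simp [transpose_mul, transpose_pow, Matrix.mul_assoc]
end

section
/- Let A be an n×n real matrix, b ∈ ℝⁿ, μ₀ ∈ (0,1], and let X be an n×n real symmetric positive semidefinite matrix satisfying the modified algebraic Riccati equation X = AᵀXA − μ₀·(1 + bᵀXb)⁻¹·(AᵀXb)(bᵀXA). Define β := μ₀⁻¹ + (μ₀⁻¹ − 1)·bᵀXb. Then β ≥ 1, and the matrix X_β := β⁻¹X satisfies the standard algebraic Riccati equation X_β = AᵀX_βA − (1 + bᵀX_βb)⁻¹·(AᵀX_βb)(bᵀX_βA). Moreover, if e := 1 − μ₀, M is a real number with e·M² < 1, and bᵀX_βb = M² − 1, then bᵀXb = (M² − 1)/(1 − e·M²). -/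
open Matrix

/-- Rescaling argument in the proof of Corollary 1: if `X ⪰ 0` solves the modified
algebraic Riccati equation `X = AᵀXA − μ₀(1+bᵀXb)⁻¹(AᵀXb)(bᵀXA)` with `μ₀ ∈ (0,1]`, then
`β = μ₀⁻¹ + (μ₀⁻¹−1)bᵀXb ≥ 1`, `X_β = β⁻¹X` solves the standard DARE, and if moreover
`e = 1−μ₀`, `eM² < 1` and `bᵀX_βb = M²−1`, then `bᵀXb = (M²−1)/(1−eM²)`. -/
theorem stmt_14 (n : ℕ)
    (A : Matrix (Fin n) (Fin n) ℝ) (b : Matrix (Fin n) (Fin 1) ℝ)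
    (μ₀ : ℝ) (hμ₀ : 0 < μ₀) (hμ₁ : μ₀ ≤ 1)
    (X : Matrix (Fin n) (Fin n) ℝ) (hX : X.PosSemidef)
    (hric : X = Aᵀ * X * A
      - (μ₀ * (1 + (bᵀ * X * b) 0 0)⁻¹) • (Aᵀ * X * b * (bᵀ * X * A)))
    (β : ℝ) (hβ : β = μ₀⁻¹ + (μ₀⁻¹ - 1) * (bᵀ * X * b) 0 0)
    (Xβ : Matrix (Fin n) (Fin n) ℝ) (hXβ : Xβ = β⁻¹ • X) :
    1 ≤ β ∧
    Xβ = Aᵀ * Xβ * A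
      - (1 + (bᵀ * Xβ * b) 0 0)⁻¹ • (Aᵀ * Xβ * b * (bᵀ * Xβ * A)) ∧
    (∀ e M : ℝ, e = 1 - μ₀ → e * M ^ 2 < 1 → (bᵀ * Xβ * b) 0 0 = M ^ 2 - 1 →
      (bᵀ * X * b) 0 0 = (M ^ 2 - 1) / (1 - e * M ^ 2)) := by
  set s : ℝ := (bᵀ * X * b) 0 0 with hs_def
  have hμne : μ₀ ≠ 0 := ne_of_gt hμ₀
  have hs : 0 ≤ s := by
    have h : (0 : ℝ) ≤ _ := hX.dotProduct_mulVec_nonneg (fun i => b i 0)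
    convert h using 1
    rw [hs_def]
    simp only [Matrix.mul_apply, Matrix.mulVec, dotProduct,
      Matrix.transpose_apply, Finset.sum_mul, Finset.mul_sum, star_trivial]
    rw [Finset.sum_comm]
    apply Finset.sum_congr rfl
    intros i _
    apply Finset.sum_congr rfl
    intros j _
    ring
  have hμinv : 1 ≤ μ₀⁻¹ := (one_le_inv_iff₀).2 ⟨hμ₀, hμ₁⟩
  have hβ1 : 1 ≤ β := by rw [hβ]; nlinarith
  have hβpos : 0 < β := lt_of_lt_of_le one_pos hβ1
  have hβne : β ≠ 0 := ne_of_gt hβpos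
  have h1s : 0 < 1 + s := by linarith
  have h1sne : (1 : ℝ) + s ≠ 0 := ne_of_gt h1s
  have hsβ : (bᵀ * Xβ * b) 0 0 = β⁻¹ * s := by
    rw [hXβ]; simp [Matrix.mul_smul, Matrix.smul_mul]; exact Or.inl rfl
  refine ⟨hβ1, ?_, ?_⟩
  · have hbs : β + s = μ₀⁻¹ * (1 + s) := by rw [hβ]; ring
    have hbsne : β + s ≠ 0 := by positivity
    have key : (1 + β⁻¹ * s)⁻¹ * β⁻¹ = μ₀ * (1 + s)⁻¹ := by
      rw [← mul_inv, show (1 + β⁻¹ * s) * β = β + s by field_simp, hbs,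
        mul_inv, inv_inv]
    rw [hsβ, hXβ]
    nth_rewrite 1 [hric]
    simp only [Matrix.mul_smul, Matrix.smul_mul, smul_smul, smul_sub]
    congr 1
    rw [show (1 + β⁻¹ * s)⁻¹ * (β⁻¹ * β⁻¹) = β⁻¹ * ((1 + β⁻¹ * s)⁻¹ * β⁻¹) by
      ring, key]
  · intro e M he hM hMs
    rw [hsβ] at hMs
    have hse : s = β * (M ^ 2 - 1) := by
      rw [← hMs]; field_simp
    have hden : (0 : ℝ) < 1 - e * M ^ 2 := by linarith
    rw [eq_div_iff (ne_of_gt hden)]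
    rw [hβ] at hse
    rw [he]
    field_simp at hse
    nlinarith [hse]
end

section
/- Let τ̄ ∈ ℕ, let p₀,…,p_{τ̄} be real numbers with Σ_{i=0}^{τ̄} pᵢ = 1, and let α₀,…,α_{τ̄} be real numbers. Define β_{i,j} := δ(i−j)·αᵢ²pᵢ − αᵢαⱼpᵢpⱼ for i,j ∈ {0,…,τ̄} (extended by zero outside this range, δ the Kronecker delta), and r(λ) := Σ_{i∈ℤ} β_{i,i+λ} for λ ∈ ℤ. Then for every nonzero complex number z, Σ_{λ=−τ̄}^{τ̄} r(λ)·z^{−λ} = (1/2)·Σ_{i=0}^{τ̄} Σ_{j=0}^{τ̄} (αᵢzⁱ − αⱼzʲ)(αᵢz^{−i} − αⱼz^{−j})·pᵢpⱼ. -/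
/-- Energy spectral density formula of Section 4.1: for the covariance array
`β_{ij} = δ(i−j)αᵢ²pᵢ − αᵢαⱼpᵢpⱼ` of a random-delay channel with `∑pᵢ = 1` and
autocorrelation `r(λ) = ∑ᵢ β_{i,i+λ}`, one has, for every nonzero complex `z`,
`∑_{λ=−τ̄}^{τ̄} r(λ)z^{−λ} = (1/2)∑ᵢ∑ⱼ(αᵢzⁱ−αⱼzʲ)(αᵢz^{−i}−αⱼz^{−j})pᵢpⱼ`. -/
theorem stmt_17 (τ : ℕ) (p α : ℤ → ℝ)
    (hp : ∑ i ∈ Finset.Icc (0 : ℤ) (τ : ℤ), p i = 1)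
    (β : ℤ → ℤ → ℝ)
    (hβ : ∀ i j : ℤ, i ∈ Finset.Icc (0 : ℤ) (τ : ℤ) → j ∈ Finset.Icc (0 : ℤ) (τ : ℤ) →
      β i j = (if i = j then (1 : ℝ) else 0) * α i ^ 2 * p i - α i * α j * p i * p j)
    (hβzero : ∀ i j : ℤ, i ∉ Finset.Icc (0 : ℤ) (τ : ℤ) ∨ j ∉ Finset.Icc (0 : ℤ) (τ : ℤ) →
      β i j = 0)
    (r : ℤ → ℝ) (hr : ∀ lam : ℤ, r lam = ∑ᶠ i : ℤ, β i (i + lam)) :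
    ∀ z : ℂ, z ≠ 0 →
      ∑ lam ∈ Finset.Icc (-(τ : ℤ)) (τ : ℤ), (r lam : ℂ) * z ^ (-lam)
        = (1 / 2 : ℂ) * ∑ i ∈ Finset.Icc (0 : ℤ) (τ : ℤ),
            ∑ j ∈ Finset.Icc (0 : ℤ) (τ : ℤ),
              ((α i : ℂ) * z ^ i - (α j : ℂ) * z ^ j) *
                ((α i : ℂ) * z ^ (-i) - (α j : ℂ) * z ^ (-j)) *
                ((p i : ℂ) * (p j : ℂ)) := by
  intro z hz
  set S := Finset.Icc (0 : ℤ) (τ : ℤ) with hS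
  -- r as a finite sum
  have hrsum : ∀ lam : ℤ, r lam = ∑ i ∈ S, β i (i + lam) := by
    intro lam
    rw [hr lam]
    refine finsum_eq_finset_sum_of_support_subset _ ?_
    intro i hi
    simp only [Function.mem_support] at hi
    by_contra h
    exact hi (hβzero i (i + lam) (Or.inl h))
  -- rewrite LHS as a double sum over S × S
  have key : ∑ lam ∈ Finset.Icc (-(τ : ℤ)) (τ : ℤ), (r lam : ℂ) * z ^ (-lam)
      = ∑ i ∈ S, ∑ j ∈ S, (β i j : ℂ) * z ^ (i - j) := by
    have h0 : ∀ lam, (r lam : ℂ) * z ^ (-lam) = ∑ i ∈ S, (β i (i + lam) : ℂ) * z ^ (-lam) := by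
      intro lam
      rw [hrsum lam]
      push_cast
      rw [Finset.sum_mul]
    rw [Finset.sum_congr rfl fun lam _ => h0 lam, Finset.sum_comm]
    refine Finset.sum_congr rfl fun i hi => ?_
    have himg : Finset.Icc (i - (τ : ℤ)) (i + (τ : ℤ))
        = (Finset.Icc (-(τ : ℤ)) (τ : ℤ)).image (i + ·) := by
      rw [Finset.image_add_left_Icc]
      congr 1
    have h1 : ∑ lam ∈ Finset.Icc (-(τ : ℤ)) (τ : ℤ), (β i (i + lam) : ℂ) * z ^ (-lam)
        = ∑ j ∈ Finset.Icc (i - (τ : ℤ)) (i + (τ : ℤ)), (β i j : ℂ) * z ^ (i - j) := by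
      rw [himg, Finset.sum_image (by intro a _ b _ h; exact add_left_cancel h)]
      refine Finset.sum_congr rfl fun lam _ => ?_
      rw [show i - (i + lam) = -lam by ring]
    rw [h1]
    symm
    apply Finset.sum_subset
    · intro j hj
      simp only [hS, Finset.mem_Icc] at hi hj ⊢
      omega
    · intro j _ hjnot
      rw [hβzero i j (Or.inr hjnot)]
      simp
  rw [key]
  -- substitute β
  have hsub : ∀ i ∈ S, ∀ j ∈ S, (β i j : ℂ) * z ^ (i - j)
      = (if i = j then ((α i : ℂ) ^ 2 * p i) else 0)
        - (α i : ℂ) * α j * (p i * p j) * z ^ (i - j) := by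
    intro i hi j hj
    rw [hβ i j hi hj]
    split_ifs with h
    · subst h
      push_cast
      simp only [sub_self, zpow_zero]
      ring
    · push_cast
      ring
  rw [Finset.sum_congr rfl fun i hi =>
    Finset.sum_congr rfl fun j hj => hsub i hi j hj]
  simp only [Finset.sum_sub_distrib]
  have hdiag : ∑ i ∈ S, ∑ j ∈ S, (if i = j then ((α i : ℂ) ^ 2 * p i) else 0)
      = ∑ i ∈ S, (α i : ℂ) ^ 2 * p i := by
    refine Finset.sum_congr rfl fun i hi => ?_
    rw [Finset.sum_ite_eq S i fun j => (α i : ℂ) ^ 2 * p i, if_pos hi]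
  rw [hdiag]
  -- the p's sum to 1 over ℂ
  have hpC : ∑ j ∈ S, (p j : ℂ) = 1 := by
    rw [← Complex.ofReal_sum, hp]
    norm_num
  -- expand each RHS term
  have hterm : ∀ i j : ℤ,
      ((α i : ℂ) * z ^ i - (α j : ℂ) * z ^ j) *
        ((α i : ℂ) * z ^ (-i) - (α j : ℂ) * z ^ (-j)) * ((p i : ℂ) * (p j : ℂ))
      = (α i : ℂ) ^ 2 * ((p i : ℂ) * p j) + (α j : ℂ) ^ 2 * ((p i : ℂ) * p j)
        - (α i : ℂ) * α j * ((p i : ℂ) * p j) * z ^ (i - j)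
        - (α i : ℂ) * α j * ((p i : ℂ) * p j) * z ^ (j - i) := by
    intro i j
    have e1 : z ^ i * z ^ (-i) = 1 := by
      rw [← zpow_add₀ hz]; simp
    have e2 : z ^ j * z ^ (-j) = 1 := by
      rw [← zpow_add₀ hz]; simp
    have e3 : z ^ i * z ^ (-j) = z ^ (i - j) := by
      rw [← zpow_add₀ hz, sub_eq_add_neg]
    have e4 : z ^ j * z ^ (-i) = z ^ (j - i) := by
      rw [← zpow_add₀ hz, sub_eq_add_neg]
    linear_combination ((α i : ℂ) ^ 2 * (p i * p j)) * e1
      + ((α j : ℂ) ^ 2 * (p i * p j)) * e2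
      - ((α i : ℂ) * α j * (p i * p j)) * e3
      - ((α i : ℂ) * α j * (p i * p j)) * e4
  rw [Finset.sum_congr rfl fun i _ => Finset.sum_congr rfl fun j _ => hterm i j]
  simp only [Finset.sum_sub_distrib, Finset.sum_add_distrib]
  -- symmetry rewrites
  have hA : ∑ i ∈ S, ∑ j ∈ S, (α j : ℂ) ^ 2 * ((p i : ℂ) * p j)
      = ∑ i ∈ S, ∑ j ∈ S, (α i : ℂ) ^ 2 * ((p i : ℂ) * p j) := by
    rw [Finset.sum_comm]
    exact Finset.sum_congr rfl fun i _ => Finset.sum_congr rfl fun j _ => by ring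
  have hB : ∑ i ∈ S, ∑ j ∈ S, (α i : ℂ) * α j * ((p i : ℂ) * p j) * z ^ (j - i)
      = ∑ i ∈ S, ∑ j ∈ S, (α i : ℂ) * α j * ((p i : ℂ) * p j) * z ^ (i - j) := by
    rw [Finset.sum_comm]
    exact Finset.sum_congr rfl fun i _ => Finset.sum_congr rfl fun j _ => by ring
  have hA' : ∑ i ∈ S, ∑ j ∈ S, (α i : ℂ) ^ 2 * ((p i : ℂ) * p j)
      = ∑ i ∈ S, (α i : ℂ) ^ 2 * p i := by
    refine Finset.sum_congr rfl fun i _ => ?_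
    have : ∀ j, (α i : ℂ) ^ 2 * ((p i : ℂ) * p j) = ((α i : ℂ) ^ 2 * p i) * p j := by
      intro j; ring
    rw [Finset.sum_congr rfl fun j _ => this j, ← Finset.mul_sum, hpC, mul_one]
  rw [hA, hB, hA']
  ring
end
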